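/- Fix $n \ge 1$ and an equivalence relation $\sim$ on $\{1,\ldots,n+1\}$; let $C = \{i : i \sim n+1\}$ be the equivalence class of $n+1$ with $|C| = k$. Let $a_1, \ldots, a_{n+1}$ be real random variables such that, conditionally on the multiset of values $\{a_i : i \in C\}$ (assumed almost surely to consist of $k$ distinct values), the assignment of these values to the indices in $C$ is uniformly distributed over all $k!$ bijections. Let $\tau \sim U[0,1]$ independently. Then $\frac{1}{k}\left(|\{i \in C : a_i < a_{n+1}\}| + \tau\right)$ is uniformly distributed on $[0,1]$. -/
import Mathlib

open MeasureTheory ProbabilityTheory Finset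
open scoped ENNReal

/-- Sum of clamped values telescopes. -/
lemma sum_clamp : ∀ (k : ℕ) (x : ℝ), 0 ≤ x → x ≤ k →
    ∑ r ∈ Finset.range k, max (min (x - r) 1) 0 = x := by
  intro k
  induction k with
  | zero => intro x h0 hk; simp only [Nat.cast_zero] at hk; simp; linarith
  | succ k ih =>
    intro x h0 hk
    rw [Finset.sum_range_succ]
    rcases le_total x k with h | h
    · rw [ih x h0 h]
      have h1 : min (x - (k:ℝ)) 1 ≤ 0 := le_trans (min_le_left _ _) (by linarith)
      rw [max_eq_right h1, add_zero]
    · have hk' : x ≤ (k:ℝ) + 1 := by push_cast at hk; linarith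
      have hsum : ∑ r ∈ Finset.range k, max (min (x - r) 1) 0 = k := by
        rw [Finset.sum_congr rfl (g := fun _ => (1:ℝ)) (fun r hr => ?_)]
        · simp
        · have hr' : (r:ℝ) + 1 ≤ (k:ℝ) := by
            exact_mod_cast Nat.succ_le_of_lt (Finset.mem_range.mp hr)
          have h1 : (1:ℝ) ≤ x - r := by linarith
          rw [min_eq_right h1, max_eq_left (by linarith)]
      rw [hsum]
      have h2 : min (x - (k:ℝ)) 1 = x - k := min_eq_left (by linarith)
      rw [h2, max_eq_left (by linarith)]
      ring

/-- Filtering by a predicate precomposed with a permutation preserving `s`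
preserves the cardinality of the filter. -/
lemma card_filter_perm {ι : Type*} [DecidableEq ι] (π : Equiv.Perm ι) (s : Finset ι)
    (h : ∀ i, i ∈ s ↔ π i ∈ s) (q : ι → Prop) [DecidablePred q]
    [DecidablePred fun i => q (π i)] :
    (s.filter fun i => q (π i)).card = (s.filter q).card := by
  apply Finset.card_bij (fun i _ => π i)
  · intro i hi
    simp only [Finset.mem_filter] at hi ⊢
    exact ⟨(h i).1 hi.1, hi.2⟩
  · intro i _ j _ hij
    exact π.injective hij
  · intro b hb
    simp only [Finset.mem_filter] at hb
    refine ⟨π.symm b, ?_, by simp⟩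
    simp only [Finset.mem_filter]
    refine ⟨?_, by simp [hb.2]⟩
    rw [h]
    simpa using hb.1

lemma ofReal_eq_ofReal_max (x : ℝ) : ENNReal.ofReal x = ENNReal.ofReal (max x 0) := by
  rcases le_total 0 x with h | h
  · rw [max_eq_left h]
  · rw [max_eq_right h, ENNReal.ofReal_eq_zero.mpr h, ENNReal.ofReal_zero]

/-- Validity of Mondrian transducers: if the conformity scores are exchangeable
within the equivalence class `C` of the test index `n+1` (of size `k`) and
almost surely distinct there, then the smoothed within-class p-value
`(|{i ∈ C : a i < a (last)}| + τ)/k` is uniform on `[0,1]`. -/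
theorem stmt_17 {Ω : Type*} [MeasurableSpace Ω] (P : Measure Ω) [IsProbabilityMeasure P]
    (n : ℕ) (s : Fin (n + 1) → Fin (n + 1) → Prop) [DecidablePred fun i => s i (Fin.last n)]
    (hs : Equivalence s)
    (C : Finset (Fin (n + 1))) (hC : C = univ.filter (fun i => s i (Fin.last n)))
    (k : ℕ) (hk : k = C.card)
    (a : Fin (n + 1) → Ω → ℝ) (ha : ∀ i, Measurable (a i))
    (hexch : ∀ π : Equiv.Perm (Fin (n + 1)), (∀ i, i ∉ C → π i = i) →
      Measure.map (fun ω => fun i => a (π i) ω) P = Measure.map (fun ω => fun i => a i ω) P)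
    (hdistinct : ∀ i ∈ C, ∀ j ∈ C, i ≠ j → P {ω | a i ω = a j ω} = 0)
    (τ : Ω → ℝ) (hτ : Measurable τ)
    (hτunif : Measure.map τ P = volume.restrict (Set.Icc (0 : ℝ) 1))
    (hindep : IndepFun (fun ω => fun i => a i ω) τ P) :
    ∀ c : ℝ, c ∈ Set.Icc (0 : ℝ) 1 →
      P {ω | (((C.filter (fun i => a i ω < a (Fin.last n) ω)).card : ℝ) + τ ω) / k ≤ c}
        = ENNReal.ofReal c := by
  intro c hc
  -- basic facts
  have hlast : Fin.last n ∈ C := by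
    rw [hC]; simp only [Finset.mem_filter, Finset.mem_univ, true_and]; exact hs.refl _
  have hkpos : 0 < k := by rw [hk]; exact Finset.card_pos.mpr ⟨_, hlast⟩
  have hk0 : (k : ℝ) ≠ 0 := Nat.cast_ne_zero.mpr hkpos.ne'
  -- the score vector and rank function
  set F : Ω → (Fin (n + 1) → ℝ) := fun ω => fun i => a i ω with hFdef
  have hF : Measurable F := measurable_pi_lambda _ ha
  set ρ : (Fin (n + 1) → ℝ) → ℕ :=
    fun v => (C.filter fun i => v i < v (Fin.last n)).card with hρdef
  have hρmeas : Measurable ρ := by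
    have hrw : ρ = fun v => ∑ i ∈ C, if v i < v (Fin.last n) then 1 else 0 := by
      funext v; exact Finset.card_filter _ _
    rw [hrw]
    exact Finset.measurable_sum _ fun i _ =>
      Measurable.ite (measurableSet_lt (measurable_pi_apply i) (measurable_pi_apply _))
        measurable_const measurable_const
  -- ranks within the class
  have hbound : ∀ (ω : Ω), ∀ j ∈ C, (C.filter fun i => a i ω < a j ω).card < k := by
    intro ω j hj
    have hsub : (C.filter fun i => a i ω < a j ω) ⊆ C.erase j := by
      intro i hi
      rw [Finset.mem_filter] at hi
      refine Finset.mem_erase.mpr ⟨?_, hi.1⟩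
      rintro rfl; exact lt_irrefl _ hi.2
    calc (C.filter fun i => a i ω < a j ω).card ≤ (C.erase j).card :=
          Finset.card_le_card hsub
      _ = C.card - 1 := Finset.card_erase_of_mem hj
      _ < k := by rw [hk]; omega
  have hρlt : ∀ v, ρ v < k := by
    intro v
    have hsub : (C.filter fun i => v i < v (Fin.last n)) ⊆ C.erase (Fin.last n) := by
      intro i hi
      rw [Finset.mem_filter] at hi
      refine Finset.mem_erase.mpr ⟨?_, hi.1⟩
      rintro rfl; exact lt_irrefl _ hi.2
    calc ρ v ≤ (C.erase (Fin.last n)).card := Finset.card_le_card hsub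
      _ = C.card - 1 := Finset.card_erase_of_mem hlast
      _ < k := by rw [hk]; omega
  -- rank is strictly monotone in the value
  have hmono : ∀ (ω : Ω), ∀ j ∈ C, ∀ j' ∈ C, a j ω < a j' ω →
      (C.filter fun i => a i ω < a j ω).card < (C.filter fun i => a i ω < a j' ω).card := by
    intro ω j hj j' hj' hlt
    apply Finset.card_lt_card
    rw [Finset.ssubset_iff_of_subset]
    · exact ⟨j, Finset.mem_filter.mpr ⟨hj, hlt⟩, fun hmem =>
        lt_irrefl _ (Finset.mem_filter.mp hmem).2⟩
    · intro i hi
      rw [Finset.mem_filter] at hi ⊢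
      exact ⟨hi.1, hi.2.trans hlt⟩
  -- null set where scores coincide within the class
  set N : Set Ω :=
    ⋃ p : Fin (n + 1) × Fin (n + 1),
      {ω | p.1 ∈ C ∧ p.2 ∈ C ∧ p.1 ≠ p.2 ∧ a p.1 ω = a p.2 ω} with hNdef
  have hN0 : P N = 0 := by
    apply measure_iUnion_null
    intro p
    by_cases h : p.1 ∈ C ∧ p.2 ∈ C ∧ p.1 ≠ p.2
    · exact measure_mono_null (fun ω hω => hω.2.2.2) (hdistinct _ h.1 _ h.2.1 h.2.2)
    · have : {ω | p.1 ∈ C ∧ p.2 ∈ C ∧ p.1 ≠ p.2 ∧ a p.1 ω = a p.2 ω} = ∅ := by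
        ext ω; simp only [Set.mem_setOf_eq, Set.mem_empty_iff_false, iff_false]
        tauto
      rw [this, measure_empty]
  have hNmeas : MeasurableSet N := by
    apply MeasurableSet.iUnion
    intro p
    have : {ω | p.1 ∈ C ∧ p.2 ∈ C ∧ p.1 ≠ p.2 ∧ a p.1 ω = a p.2 ω}
        = {ω | p.1 ∈ C} ∩ ({ω | p.2 ∈ C} ∩ ({ω | p.1 ≠ p.2} ∩ {ω | a p.1 ω = a p.2 ω})) := rfl
    rw [this]
    exact (MeasurableSet.const _).inter ((MeasurableSet.const _).inter
      ((MeasurableSet.const _).inter (measurableSet_eq_fun (ha _) (ha _))))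
  -- injectivity of ranks away from N
  have hinj : ∀ ω ∉ N, ∀ j ∈ C, ∀ j' ∈ C, j ≠ j' →
      (C.filter fun i => a i ω < a j ω).card ≠ (C.filter fun i => a i ω < a j' ω).card := by
    intro ω hω j hj j' hj' hne
    have hane : a j ω ≠ a j' ω := by
      intro heq
      exact hω (Set.mem_iUnion.mpr ⟨(j, j'), hj, hj', hne, heq⟩)
    rcases lt_or_gt_of_ne hane with h | h
    · exact (hmono ω j hj j' hj' h).ne
    · exact (hmono ω j' hj' j hj h).ne'
  -- coverage of ranks away from N
  have hcover : ∀ ω ∉ N, ∀ r < k, ∃ j ∈ C, (C.filter fun i => a i ω < a j ω).card = r := by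
    intro ω hω r hr
    have himg : C.image (fun j => (C.filter fun i => a i ω < a j ω).card) = Finset.range k := by
      apply Finset.eq_of_subset_of_card_le
      · intro r' hr'
        rw [Finset.mem_image] at hr'
        obtain ⟨j, hj, rfl⟩ := hr'
        exact Finset.mem_range.mpr (hbound ω j hj)
      · rw [Finset.card_range, Finset.card_image_of_injOn, ← hk]
        intro x hx y hy hxy
        by_contra hne
        exact hinj ω hω x hx y hy hne hxy
    have : r ∈ C.image (fun j => (C.filter fun i => a i ω < a j ω).card) := by
      rw [himg]; exact Finset.mem_range.mpr hr
    rw [Finset.mem_image] at this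
    obtain ⟨j, hj, hjr⟩ := this
    exact ⟨j, hj, hjr⟩
  -- events
  have hSmeas : ∀ (j : Fin (n + 1)) (r : ℕ),
      MeasurableSet {ω | (C.filter fun i => a i ω < a j ω).card = r} := by
    intro j r
    have hmeasR : Measurable fun ω => (C.filter fun i => a i ω < a j ω).card := by
      have hrw : (fun ω => (C.filter fun i => a i ω < a j ω).card)
          = fun ω => ∑ i ∈ C, if a i ω < a j ω then 1 else 0 := by
        funext ω; exact Finset.card_filter _ _
      rw [hrw]
      exact Finset.measurable_sum _ fun i _ =>
        Measurable.ite (measurableSet_lt (ha i) (ha j)) measurable_const measurable_const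
    exact hmeasR (measurableSet_singleton r)
  -- exchangeability: each class member has the same rank distribution
  have hRj : ∀ (r : ℕ), ∀ j ∈ C,
      P {ω | (C.filter fun i => a i ω < a j ω).card = r}
        = P {ω | ρ (F ω) = r} := by
    intro r j hj
    set π : Equiv.Perm (Fin (n + 1)) := Equiv.swap j (Fin.last n) with hπdef
    have hfix : ∀ i, i ∉ C → π i = i := by
      intro i hi
      apply Equiv.swap_apply_of_ne_of_ne
      · rintro rfl; exact hi hj
      · rintro rfl; exact hi hlast
    have hπC : ∀ i, i ∈ C ↔ π i ∈ C := by
      intro i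
      by_cases hij : i = j
      · subst hij; rw [hπdef]; simp [Equiv.swap_apply_left, hj, hlast]
      · by_cases hil : i = Fin.last n
        · subst hil; rw [hπdef]; simp [Equiv.swap_apply_right, hj, hlast]
        · rw [hπdef, Equiv.swap_apply_of_ne_of_ne hij hil]
    have hG : Measurable (fun ω => fun i => a (π i) ω) :=
      measurable_pi_lambda _ fun i => ha (π i)
    have hπlast : π (Fin.last n) = j := Equiv.swap_apply_right _ _
    have hkey : ∀ ω, ρ (fun i => a (π i) ω) = (C.filter fun i => a i ω < a j ω).card := by
      intro ω
      have h1 : ρ (fun i => a (π i) ω)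
          = (C.filter fun i => a i ω < a (π (Fin.last n)) ω).card :=
        card_filter_perm π C hπC (fun i => a i ω < a (π (Fin.last n)) ω)
      rw [h1]
      simp only [hπlast]
    have hset : {ω | (C.filter fun i => a i ω < a j ω).card = r}
        = (fun ω => fun i => a (π i) ω) ⁻¹' (ρ ⁻¹' {r}) := by
      ext ω
      simp only [Set.mem_setOf_eq, Set.mem_preimage, Set.mem_singleton_iff]
      rw [hkey ω]
    rw [hset, ← Measure.map_apply hG (hρmeas (measurableSet_singleton r)),
      hexch π hfix, Measure.map_apply hF (hρmeas (measurableSet_singleton r))]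
    rfl
  -- uniform rank
  have huniform : ∀ r < k, P {ω | ρ (F ω) = r} = (k : ℝ≥0∞)⁻¹ := by
    intro r hr
    set S : Fin (n + 1) → Set Ω :=
      fun j => {ω | (C.filter fun i => a i ω < a j ω).card = r} with hSdef
    have hsum1 : ∑ j ∈ C, P (S j) = 1 := by
      have heach : ∀ j ∈ C, P (S j) = P (S j \ N) := fun j _ =>
        (measure_diff_null hN0).symm
      rw [Finset.sum_congr rfl heach]
      rw [← measure_biUnion_finset]
      · have hU : ⋃ j ∈ C, S j \ N = Nᶜ := by
          ext ω
          simp only [Set.mem_iUnion, Set.mem_diff, Set.mem_compl_iff]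
          constructor
          · rintro ⟨j, _, _, hω⟩; exact hω
          · intro hω
            obtain ⟨j, hj, hjr⟩ := hcover ω hω r hr
            exact ⟨j, hj, hjr, hω⟩
        rw [hU, Set.compl_eq_univ_diff, measure_diff_null hN0, measure_univ]
      · intro j hj j' hj' hne
        refine Set.disjoint_left.mpr ?_
        rintro ω ⟨hωj, hωN⟩ ⟨hωj', _⟩
        exact hinj ω hωN j hj j' hj' hne (hωj.trans hωj'.symm)
      · exact fun j _ => (hSmeas j r).diff hNmeas
    have hconst : ∀ j ∈ C, P (S j) = P {ω | ρ (F ω) = r} := fun j hj => hRj r j hj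
    rw [Finset.sum_congr rfl hconst, Finset.sum_const, ← hk, nsmul_eq_mul] at hsum1
    have hkne : (k : ℝ≥0∞) ≠ 0 := Nat.cast_ne_zero.mpr hkpos.ne'
    have hktop : (k : ℝ≥0∞) ≠ ⊤ := ENNReal.natCast_ne_top k
    calc P {ω | ρ (F ω) = r}
        = (k : ℝ≥0∞)⁻¹ * ((k : ℝ≥0∞) * P {ω | ρ (F ω) = r}) := by
          rw [← mul_assoc, ENNReal.inv_mul_cancel hkne hktop, one_mul]
      _ = (k : ℝ≥0∞)⁻¹ := by rw [hsum1, mul_one]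
  -- now the Fubini computation
  have hmap_pair : Measure.map (fun ω => (F ω, τ ω)) P
      = (Measure.map F P).prod (Measure.map τ P) :=
    (indepFun_iff_map_prod_eq_prod_map_map hF.aemeasurable hτ.aemeasurable).mp hindep
  set T : Set ((Fin (n + 1) → ℝ) × ℝ) := {p | (((ρ p.1 : ℕ) : ℝ) + p.2) / k ≤ c} with hTdef
  have hTmeas : MeasurableSet T := by
    have : Measurable fun p : (Fin (n + 1) → ℝ) × ℝ => (((ρ p.1 : ℕ) : ℝ) + p.2) / k := by
      apply Measurable.div_const
      exact ((measurable_from_top.comp (hρmeas.comp measurable_fst))).add measurable_snd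
    exact this measurableSet_Iic
  have hsetE : {ω | (((C.filter fun i => a i ω < a (Fin.last n) ω).card : ℝ) + τ ω) / k ≤ c}
      = (fun ω => (F ω, τ ω)) ⁻¹' T := rfl
  rw [hsetE, ← Measure.map_apply (hF.prodMk hτ) hTmeas, hmap_pair, hτunif,
    Measure.prod_apply hTmeas]
  have hslice : ∀ v : Fin (n + 1) → ℝ,
      (volume.restrict (Set.Icc (0:ℝ) 1)) (Prod.mk v ⁻¹' T)
        = ENNReal.ofReal (min (c * k - (ρ v : ℝ)) 1) := by
    intro v
    have hpre : Prod.mk v ⁻¹' T = Set.Iic (c * k - (ρ v : ℝ)) := by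
      ext t
      simp only [Set.mem_preimage, hTdef, Set.mem_setOf_eq, Set.mem_Iic]
      rw [div_le_iff₀ (by positivity : (0:ℝ) < k)]
      constructor <;> intro h <;> linarith
    rw [hpre, Measure.restrict_apply measurableSet_Iic]
    have : Set.Iic (c * k - (ρ v : ℝ)) ∩ Set.Icc (0:ℝ) 1
        = Set.Icc (0:ℝ) (min (c * k - (ρ v : ℝ)) 1) := by
      ext t
      simp only [Set.mem_inter_iff, Set.mem_Iic, Set.mem_Icc, le_min_iff]
      constructor
      · rintro ⟨h1, h2, h3⟩; exact ⟨h2, h1, h3⟩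
      · rintro ⟨h1, h2, h3⟩; exact ⟨h2, h1, h3⟩
    rw [this, Real.volume_Icc, sub_zero]
  rw [lintegral_congr hslice]
  -- decompose over the value of ρ
  have hpt : ∀ v : Fin (n + 1) → ℝ,
      ENNReal.ofReal (min (c * k - (ρ v : ℝ)) 1)
        = ∑ r ∈ Finset.range k,
            Set.indicator {w | ρ w = r} (fun _ => ENNReal.ofReal (min (c * k - (r : ℝ)) 1)) v := by
    intro v
    rw [Finset.sum_eq_single (ρ v)]
    · rw [Set.indicator_of_mem (show v ∈ {w | ρ w = ρ v} from rfl)]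
    · intro r _ hrne
      rw [Set.indicator_of_notMem]
      intro hmem
      simp only [Set.mem_setOf_eq] at hmem
      exact hrne hmem.symm
    · intro hnot
      exact absurd (Finset.mem_range.mpr (hρlt v)) hnot
  rw [lintegral_congr hpt, lintegral_finset_sum]
  swap
  · exact fun r _ => Measurable.indicator measurable_const (hρmeas (measurableSet_singleton r))
  have hμr : ∀ r ∈ Finset.range k,
      (Measure.map F P) {w | ρ w = r} = (k : ℝ≥0∞)⁻¹ := by
    intro r hr
    have hre : {w | ρ w = r} = ρ ⁻¹' {r} := rfl
    rw [hre, Measure.map_apply hF (hρmeas (measurableSet_singleton r))]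
    exact huniform r (Finset.mem_range.mp hr)
  have hind : ∀ r ∈ Finset.range k,
      ∫⁻ v, Set.indicator {w | ρ w = r}
          (fun _ => ENNReal.ofReal (min (c * k - (r : ℝ)) 1)) v ∂(Measure.map F P)
        = ENNReal.ofReal (min (c * k - (r : ℝ)) 1) * (k : ℝ≥0∞)⁻¹ := by
    intro r hr
    have hms : MeasurableSet {w | ρ w = r} := hρmeas (measurableSet_singleton r)
    rw [lintegral_indicator_const hms, hμr r hr]
  rw [Finset.sum_congr rfl hind, ← Finset.sum_mul]
  have hofr : (∑ r ∈ Finset.range k, ENNReal.ofReal (min (c * k - (r : ℝ)) 1))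
      = ENNReal.ofReal (c * k) := by
    rw [Finset.sum_congr rfl
        (fun (r : ℕ) (_ : r ∈ Finset.range k) =>
          ofReal_eq_ofReal_max (min (c * k - (r : ℝ)) 1)),
      ← ENNReal.ofReal_sum_of_nonneg (fun r _ => le_max_right _ _)]
    congr 1
    apply sum_clamp k (c * k) (mul_nonneg hc.1 (by positivity))
    have h1 : c * k ≤ 1 * k := mul_le_mul_of_nonneg_right hc.2 (by positivity)
    linarith
  rw [hofr, ENNReal.ofReal_mul hc.1,
    show ENNReal.ofReal ((k : ℕ) : ℝ) = ((k : ℕ) : ℝ≥0∞) from ENNReal.ofReal_natCast k,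
    mul_assoc,
    ENNReal.mul_inv_cancel (Nat.cast_ne_zero.mpr hkpos.ne') (ENNReal.natCast_ne_top k),
    mul_one]
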